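/- arXiv:1904.06947 — 6 statements merged into one kernel-verified Lean document; each statement's English description precedes it below -/
import Mathlib

section
/- Let Φ11, Φ12, Φ21, Φ22 be real n×n matrices satisfying the symplectic block identities and with Φ22 invertible, and let Φ1, Φ2 be real k×n matrices. Then the (n+k)×(n+k) block matrix D = [[ −Φ22⁻¹·Φ21 , Φ1ᵀ − Φ22⁻¹·Φ2ᵀ ], [ Φ1 − Φ2·(Φ11 − Φ12·Φ22⁻¹·Φ21) , Φ2·Φ12·Φ22⁻¹·Φ2ᵀ ]] is symmetric, i.e. Dᵀ = D. -/
open Matrix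

/-- The coefficient matrix `D` of the sweep-method algebraic system (13)/(30) is
symmetric, given the symplectic block identities and invertibility of `Φ22`. -/
theorem stmt_0 {n k : ℕ} (hn : 0 < n) (hk : 0 < k)
    (Φ11 Φ12 Φ21 Φ22 : Matrix (Fin n) (Fin n) ℝ)
    (Φ1 Φ2 : Matrix (Fin k) (Fin n) ℝ)
    (h1 : Φ22 * Φ11ᵀ - Φ21 * Φ12ᵀ = 1)
    (h2 : Φ22 * Φ21ᵀ - Φ21 * Φ22ᵀ = 0)
    (h3 : Φ11 * Φ12ᵀ - Φ12 * Φ11ᵀ = 0)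
    (h4 : Φ11 * Φ22ᵀ - Φ12 * Φ21ᵀ = 1)
    (hinv : IsUnit Φ22)
    (D : Matrix (Fin n ⊕ Fin k) (Fin n ⊕ Fin k) ℝ)
    (hD : D = Matrix.fromBlocks
      (-(Φ22⁻¹ * Φ21)) (Φ1ᵀ - Φ22⁻¹ * Φ2ᵀ)
      (Φ1 - Φ2 * (Φ11 - Φ12 * Φ22⁻¹ * Φ21)) (Φ2 * Φ12 * Φ22⁻¹ * Φ2ᵀ)) :
    Dᵀ = D := by
  have hdet : IsUnit Φ22.det := (Matrix.isUnit_iff_isUnit_det Φ22).mp hinv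
  have hdetT : IsUnit Φ22ᵀ.det := by rwa [Matrix.det_transpose]
  have hmul : Φ22 * Φ22⁻¹ = 1 := Matrix.mul_nonsing_inv _ hdet
  have hmul' : Φ22⁻¹ * Φ22 = 1 := Matrix.nonsing_inv_mul _ hdet
  -- the transposed symplectic identities, from M * N = 1 → N * M = 1
  have e1 : Φ11 * Φ22ᵀ + Φ12 * -Φ21ᵀ = 1 := by linear_combination (norm := noncomm_ring) h4
  have e2 : Φ11 * -Φ12ᵀ + Φ12 * Φ11ᵀ = 0 := by linear_combination (norm := noncomm_ring) -h3
  have e3 : Φ21 * Φ22ᵀ + Φ22 * -Φ21ᵀ = 0 := by linear_combination (norm := noncomm_ring) -h2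
  have e4 : Φ21 * -Φ12ᵀ + Φ22 * Φ11ᵀ = 1 := by linear_combination (norm := noncomm_ring) h1
  have hMN : Matrix.fromBlocks Φ11 Φ12 Φ21 Φ22 *
      Matrix.fromBlocks Φ22ᵀ (-Φ12ᵀ) (-Φ21ᵀ) Φ11ᵀ = 1 := by
    rw [Matrix.fromBlocks_multiply, e1, e2, e3, e4, Matrix.fromBlocks_one]
  have hNM := mul_eq_one_comm.mp hMN
  rw [Matrix.fromBlocks_multiply, ← Matrix.fromBlocks_one] at hNM
  -- extract the (1,2) block: Φ22ᵀ * Φ12 = Φ12ᵀ * Φ22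
  have hs' : Φ22ᵀ * Φ12 = Φ12ᵀ * Φ22 := by
    have := congrArg Matrix.toBlocks₁₂ hNM
    simp only [Matrix.toBlocks_fromBlocks₁₂] at this
    linear_combination (norm := noncomm_ring) this
  have h2' : Φ22 * Φ21ᵀ = Φ21 * Φ22ᵀ := by linear_combination (norm := noncomm_ring) h2
  -- key fact 1 : Φ22⁻¹ * Φ21 is symmetric
  have hA : (Φ22⁻¹ * Φ21)ᵀ = Φ22⁻¹ * Φ21 := by
    rw [Matrix.transpose_mul, Matrix.transpose_nonsing_inv]
    calc Φ21ᵀ * (Φ22ᵀ)⁻¹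
        = Φ22⁻¹ * Φ22 * (Φ21ᵀ * (Φ22ᵀ)⁻¹) := by rw [hmul', Matrix.one_mul]
      _ = Φ22⁻¹ * (Φ22 * Φ21ᵀ) * (Φ22ᵀ)⁻¹ := by noncomm_ring
      _ = Φ22⁻¹ * (Φ21 * Φ22ᵀ) * (Φ22ᵀ)⁻¹ := by rw [h2']
      _ = Φ22⁻¹ * Φ21 * (Φ22ᵀ * (Φ22ᵀ)⁻¹) := by noncomm_ring
      _ = Φ22⁻¹ * Φ21 := by rw [Matrix.mul_nonsing_inv _ hdetT, Matrix.mul_one]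
  -- key fact 2 : Φ11 - Φ12 * Φ22⁻¹ * Φ21 = (Φ22ᵀ)⁻¹
  have hBC : Φ11 - Φ12 * Φ22⁻¹ * Φ21 = (Φ22ᵀ)⁻¹ := by
    have haux : Φ12 * Φ22⁻¹ * Φ21 * Φ22ᵀ = Φ12 * Φ21ᵀ := by
      calc Φ12 * Φ22⁻¹ * Φ21 * Φ22ᵀ
          = Φ12 * Φ22⁻¹ * (Φ21 * Φ22ᵀ) := by noncomm_ring
        _ = Φ12 * Φ22⁻¹ * (Φ22 * Φ21ᵀ) := by rw [h2']
        _ = Φ12 * (Φ22⁻¹ * Φ22) * Φ21ᵀ := by noncomm_ring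
        _ = Φ12 * Φ21ᵀ := by rw [hmul', Matrix.mul_one]
    have hleft : (Φ11 - Φ12 * Φ22⁻¹ * Φ21) * Φ22ᵀ = 1 := by
      rw [Matrix.sub_mul, haux]; exact h4
    exact (Matrix.inv_eq_left_inv hleft).symm
  -- key fact 3 : Φ12 * Φ22⁻¹ is symmetric
  have hS : (Φ12 * Φ22⁻¹)ᵀ = Φ12 * Φ22⁻¹ := by
    rw [Matrix.transpose_mul, Matrix.transpose_nonsing_inv]
    calc (Φ22ᵀ)⁻¹ * Φ12ᵀ
        = (Φ22ᵀ)⁻¹ * Φ12ᵀ * (Φ22 * Φ22⁻¹) := by rw [hmul, Matrix.mul_one]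
      _ = (Φ22ᵀ)⁻¹ * (Φ12ᵀ * Φ22) * Φ22⁻¹ := by noncomm_ring
      _ = (Φ22ᵀ)⁻¹ * (Φ22ᵀ * Φ12) * Φ22⁻¹ := by rw [hs']
      _ = (Φ22ᵀ)⁻¹ * Φ22ᵀ * (Φ12 * Φ22⁻¹) := by noncomm_ring
      _ = Φ12 * Φ22⁻¹ := by rw [Matrix.nonsing_inv_mul _ hdetT, Matrix.one_mul]
  -- block equalities of the transpose
  have b12 : (Φ1 - Φ2 * (Φ11 - Φ12 * Φ22⁻¹ * Φ21))ᵀ = Φ1ᵀ - Φ22⁻¹ * Φ2ᵀ := by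
    rw [Matrix.transpose_sub, Matrix.transpose_mul, hBC, ← Matrix.transpose_nonsing_inv,
      Matrix.transpose_transpose]
  have b21 : (Φ1ᵀ - Φ22⁻¹ * Φ2ᵀ)ᵀ = Φ1 - Φ2 * (Φ11 - Φ12 * Φ22⁻¹ * Φ21) := by
    rw [Matrix.transpose_sub, Matrix.transpose_transpose, Matrix.transpose_mul,
      Matrix.transpose_transpose, Matrix.transpose_nonsing_inv, hBC]
  have b22 : (Φ2 * Φ12 * Φ22⁻¹ * Φ2ᵀ)ᵀ = Φ2 * Φ12 * Φ22⁻¹ * Φ2ᵀ := by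
    have : (Φ2 * Φ12 * Φ22⁻¹ * Φ2ᵀ)ᵀ = Φ2 * (Φ12 * Φ22⁻¹)ᵀ * Φ2ᵀ := by
      simp [Matrix.transpose_mul, Matrix.mul_assoc]
    rw [this, hS, Matrix.mul_assoc Φ2 Φ12 Φ22⁻¹]
  subst hD
  rw [Matrix.fromBlocks_transpose, Matrix.transpose_neg, hA, b12, b21, b22]
end

section
/- (Lemma 2) Let Φ11, Φ12, Φ21, Φ22 be real n×n matrices satisfying the symplectic block identities with Φ22 invertible, and let Φ2 be any real k×n matrix. Then the k×k matrix Φ2·Φ12·Φ22⁻¹·Φ2ᵀ is symmetric. -/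
open Matrix

/-- Lemma 2: under the symplectic block identities with `Φ22` invertible,
for any `k × n` matrix `Φ2` the matrix `Φ2 * Φ12 * Φ22⁻¹ * Φ2ᵀ` is symmetric. -/
theorem stmt_2 {n k : ℕ} (hn : 0 < n) (hk : 0 < k)
    (Φ11 Φ12 Φ21 Φ22 : Matrix (Fin n) (Fin n) ℝ)
    (Φ2 : Matrix (Fin k) (Fin n) ℝ)
    (h1 : Φ22 * Φ11ᵀ - Φ21 * Φ12ᵀ = 1)
    (h2 : Φ22 * Φ21ᵀ - Φ21 * Φ22ᵀ = 0)
    (h3 : Φ11 * Φ12ᵀ - Φ12 * Φ11ᵀ = 0)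
    (h4 : Φ11 * Φ22ᵀ - Φ12 * Φ21ᵀ = 1)
    (hinv : IsUnit Φ22) :
    (Φ2 * Φ12 * Φ22⁻¹ * Φ2ᵀ)ᵀ = Φ2 * Φ12 * Φ22⁻¹ * Φ2ᵀ := by
  have hd : IsUnit Φ22.det := (Matrix.isUnit_iff_isUnit_det _).mp hinv
  have hL : Φ22⁻¹ * Φ22 = 1 := Matrix.nonsing_inv_mul _ hd
  have hR : Φ22 * Φ22⁻¹ = 1 := Matrix.mul_nonsing_inv _ hd
  set B := Φ22⁻¹ * Φ21 with hB
  -- B is symmetric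
  have hBsym : Bᵀ = B := by
    have h2' : Φ22 * Φ21ᵀ = Φ21 * Φ22ᵀ := by linear_combination (norm := noncomm_ring) h2
    have : Φ22⁻¹ * (Φ22 * Φ21ᵀ) * Φ22⁻¹ᵀ = Φ22⁻¹ * (Φ21 * Φ22ᵀ) * Φ22⁻¹ᵀ := by rw [h2']
    have hTinv : Φ22ᵀ * Φ22⁻¹ᵀ = 1 := by
      rw [← Matrix.transpose_mul, hL, Matrix.transpose_one]
    calc Bᵀ = Φ21ᵀ * Φ22⁻¹ᵀ := by rw [hB, Matrix.transpose_mul]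
      _ = Φ22⁻¹ * (Φ22 * (Φ21ᵀ * Φ22⁻¹ᵀ)) := by rw [← mul_assoc, ← mul_assoc, hL, one_mul]
      _ = Φ22⁻¹ * (Φ22 * Φ21ᵀ) * Φ22⁻¹ᵀ := by noncomm_ring
      _ = Φ22⁻¹ * (Φ21 * Φ22ᵀ) * Φ22⁻¹ᵀ := by rw [h2']
      _ = Φ22⁻¹ * Φ21 * (Φ22ᵀ * Φ22⁻¹ᵀ) := by noncomm_ring
      _ = B := by rw [hTinv, mul_one]
  -- Φ11ᵀ = Φ22⁻¹ + B * Φ12ᵀ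
  have h11T : Φ11ᵀ = Φ22⁻¹ + B * Φ12ᵀ := by
    have h1' : Φ22 * Φ11ᵀ = 1 + Φ21 * Φ12ᵀ := by linear_combination (norm := noncomm_ring) h1
    calc Φ11ᵀ = Φ22⁻¹ * (Φ22 * Φ11ᵀ) := by rw [← mul_assoc, hL, one_mul]
      _ = Φ22⁻¹ * (1 + Φ21 * Φ12ᵀ) := by rw [h1']
      _ = Φ22⁻¹ + B * Φ12ᵀ := by rw [hB]; noncomm_ring
  have h11 : Φ11 = Φ22⁻¹ᵀ + Φ12 * B := by
    have := congrArg Matrix.transpose h11T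
    simpa [Matrix.transpose_add, Matrix.transpose_mul, hBsym] using this
  -- key symmetry
  have key : (Φ12 * Φ22⁻¹)ᵀ = Φ12 * Φ22⁻¹ := by
    have h3' : Φ11 * Φ12ᵀ = Φ12 * Φ11ᵀ := by linear_combination (norm := noncomm_ring) h3
    rw [h11T] at h3'
    rw [h11] at h3'
    have : Φ22⁻¹ᵀ * Φ12ᵀ = Φ12 * Φ22⁻¹ := by
      have expand : Φ22⁻¹ᵀ * Φ12ᵀ + Φ12 * B * Φ12ᵀ = Φ12 * Φ22⁻¹ + Φ12 * B * Φ12ᵀ := by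
        linear_combination (norm := noncomm_ring) h3'
      exact add_right_cancel expand
    rw [Matrix.transpose_mul, Matrix.transpose_nonsing_inv, ← Matrix.transpose_nonsing_inv]
    exact this
  have step : (Φ2 * Φ12 * Φ22⁻¹ * Φ2ᵀ)ᵀ = Φ2 * (Φ12 * Φ22⁻¹)ᵀ * Φ2ᵀ := by
    simp only [Matrix.transpose_mul, Matrix.transpose_transpose, Matrix.mul_assoc]
  rw [step, key]
  simp only [Matrix.mul_assoc]
end

section
/- Let H : ℝ → M_{2n}(ℝ) be such that J·H(t) is a symmetric matrix for every t, where J = [[0, I],[−I, 0]]. Suppose Φ : ℝ → M_{2n}(ℝ) is a fundamental matrix of the system, i.e. Φ is differentiable with Φ'(t) = H(t)·Φ(t) for all t and Φ(t₀) = I. Then Φ(t)ᵀ·J·Φ(t) = J for all t ∈ ℝ (the fundamental matrix is symplectic). -/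
open Matrix

attribute [local instance] Matrix.normedAddCommGroup Matrix.normedSpace

section Aux

variable {m : Type*} [Fintype m] [DecidableEq m]

local notation "M" => Matrix m m ℝ

/-- Matrix multiplication as a continuous bilinear map (finite dimensions). -/
noncomputable def mulCLM : M →L[ℝ] M →L[ℝ] M :=
  LinearMap.toContinuousLinearMap
    ((LinearMap.toContinuousLinearMap :
        (M →ₗ[ℝ] M) ≃ₗ[ℝ] (M →L[ℝ] M)).toLinearMap ∘ₗ LinearMap.mul ℝ M)

@[simp] lemma mulCLM_apply (A B : M) : mulCLM A B = A * B := by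
  simp [mulCLM]

lemma HasDerivAt.matrix_mul {f g : ℝ → M} {f' g' : M} {x : ℝ}
    (hf : HasDerivAt f f' x) (hg : HasDerivAt g g' x) :
    HasDerivAt (fun t => f t * g t) (f' * g x + f x * g') x := by
  have h := (mulCLM.hasFDerivAt_of_bilinear hf.hasFDerivAt hg.hasFDerivAt).hasDerivAt
  exact h.congr_deriv (by change mulCLM (f x) ((1:ℝ) • g') + mulCLM ((1:ℝ) • f') (g x) = _; simp [add_comm])

/-- Transpose as a continuous linear map. -/
noncomputable def transCLM : M →L[ℝ] M :=
  LinearMap.toContinuousLinearMap (Matrix.transposeLinearEquiv m m ℝ ℝ).toLinearMap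

@[simp] lemma transCLM_apply (A : M) : transCLM A = Aᵀ := rfl

lemma HasDerivAt.matrix_transpose {f : ℝ → M} {f' : M} {x : ℝ}
    (hf : HasDerivAt f f' x) :
    HasDerivAt (fun t => (f t)ᵀ) f'ᵀ x := by
  have h := (transCLM (m := m)).hasFDerivAt.comp_hasDerivAt x hf
  simp only [Function.comp_def, transCLM_apply] at h
  exact h

end Aux

/-- If `J * H t` is symmetric for all `t` (i.e. `H` is Hamiltonian-valued) and
`Φ` is the fundamental matrix solution of `Φ' = H Φ`, `Φ t₀ = 1`, then `Φ t` is
symplectic for all `t`: `(Φ t)ᵀ * J * Φ t = J`. -/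
theorem stmt_9 {n : ℕ}
    (J : Matrix (Fin n ⊕ Fin n) (Fin n ⊕ Fin n) ℝ)
    (hJ : J = Matrix.fromBlocks 0 1 (-1) 0)
    (H Φ : ℝ → Matrix (Fin n ⊕ Fin n) (Fin n ⊕ Fin n) ℝ)
    (hHam : ∀ t, (J * H t)ᵀ = J * H t)
    (t₀ : ℝ) (hΦ0 : Φ t₀ = 1)
    (hΦ : ∀ t, HasDerivAt Φ (H t * Φ t) t) :
    ∀ t, (Φ t)ᵀ * J * Φ t = J := by
  have hJT : Jᵀ = -J := by
    subst hJ
    rw [Matrix.fromBlocks_transpose, Matrix.fromBlocks_neg]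
    simp
  have hHJ : ∀ t, (H t)ᵀ * J = -(J * H t) := by
    intro t
    have := hHam t
    rw [Matrix.transpose_mul, hJT] at this
    calc (H t)ᵀ * J = -((H t)ᵀ * -J) := by noncomm_ring
    _ = -(J * H t) := by rw [this]
  set F : ℝ → Matrix (Fin n ⊕ Fin n) (Fin n ⊕ Fin n) ℝ :=
    fun t => (Φ t)ᵀ * J * Φ t with hF
  have hderiv : ∀ t, HasDerivAt F 0 t := by
    intro t
    have h1 : HasDerivAt (fun t => (Φ t)ᵀ) ((H t * Φ t)ᵀ) t :=
      (hΦ t).matrix_transpose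
    have h2 : HasDerivAt (fun t => (Φ t)ᵀ * J) ((H t * Φ t)ᵀ * J) t := by
      have := h1.matrix_mul (hasDerivAt_const t J)
      simpa using this
    have h3 := h2.matrix_mul (hΦ t)
    have key : (H t * Φ t)ᵀ * J * Φ t + (Φ t)ᵀ * J * (H t * Φ t) = 0 := by
      have : (H t * Φ t)ᵀ * J * Φ t = (Φ t)ᵀ * ((H t)ᵀ * J) * Φ t := by
        rw [Matrix.transpose_mul]; noncomm_ring
      rw [this, hHJ t]
      noncomm_ring
    rw [key] at h3
    exact h3
  have hconst : ∀ t, F t = F t₀ :=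
    fun t => is_const_of_deriv_eq_zero
      (fun x => (hderiv x).differentiableAt) (fun x => (hderiv x).deriv) t t₀
  intro t
  have := hconst t
  rw [hF] at this
  simpa [hΦ0] using this
end

section
/- Let Φ11, Φ12, Φ21, Φ22 be real n×n matrices with Φ22 invertible, Φ1, Φ2 real k×n matrices, q ∈ ℝᵏ, x₀ ∈ ℝⁿ and ν ∈ ℝᵏ. Define λ₀ := −Φ1ᵀ·ν, x_τ := Φ11·x₀ + Φ12·λ₀ and λ_τ := Φ21·x₀ + Φ22·λ₀. Then the pair (x₀, ν) satisfies the linear algebraic system D·(x₀, ν) = (0, q), where D = [[ −Φ22⁻¹·Φ21 , Φ1ᵀ − Φ22⁻¹·Φ2ᵀ ], [ Φ1 − Φ2·(Φ11 − Φ12·Φ22⁻¹·Φ21) , Φ2·Φ12·Φ22⁻¹·Φ2ᵀ ]], if and only if λ_τ = −Φ2ᵀ·ν and Φ1·x₀ − Φ2·x_τ = q. -/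
open Matrix

/-- The pair `(x₀, ν)` solves the sweep-method algebraic system `D (x₀, ν) = (0, q)`
iff the transversality condition `λ(τ) = -Φ2ᵀ ν` and the unseparated boundary
condition `Φ1 x₀ - Φ2 x(τ) = q` hold. -/
theorem stmt_12 {n k : ℕ}
    (Φ11 Φ12 Φ21 Φ22 : Matrix (Fin n) (Fin n) ℝ)
    (hinv : IsUnit Φ22)
    (Φ1 Φ2 : Matrix (Fin k) (Fin n) ℝ)
    (q : Fin k → ℝ) (x₀ : Fin n → ℝ) (ν : Fin k → ℝ)
    (lam₀ xτ lamτ : Fin n → ℝ)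
    (hlam₀ : lam₀ = -(Φ1ᵀ *ᵥ ν))
    (hxτ : xτ = Φ11 *ᵥ x₀ + Φ12 *ᵥ lam₀)
    (hlamτ : lamτ = Φ21 *ᵥ x₀ + Φ22 *ᵥ lam₀)
    (D : Matrix (Fin n ⊕ Fin k) (Fin n ⊕ Fin k) ℝ)
    (hD : D = Matrix.fromBlocks
      (-(Φ22⁻¹ * Φ21)) (Φ1ᵀ - Φ22⁻¹ * Φ2ᵀ)
      (Φ1 - Φ2 * (Φ11 - Φ12 * Φ22⁻¹ * Φ21)) (Φ2 * Φ12 * Φ22⁻¹ * Φ2ᵀ)) :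
    D *ᵥ Sum.elim x₀ ν = Sum.elim (0 : Fin n → ℝ) q ↔
      (lamτ = -(Φ2ᵀ *ᵥ ν) ∧ Φ1 *ᵥ x₀ - Φ2 *ᵥ xτ = q) := by
  have hdet : IsUnit Φ22.det := (Matrix.isUnit_iff_isUnit_det _).mp hinv
  have hAB : Φ22⁻¹ * Φ22 = 1 := Matrix.nonsing_inv_mul _ hdet
  have hBA : Φ22 * Φ22⁻¹ = 1 := Matrix.mul_nonsing_inv _ hdet
  subst hD hlam₀ hxτ hlamτ
  have h1 : (-(Φ22⁻¹ * Φ21)) *ᵥ x₀ + (Φ1ᵀ - Φ22⁻¹ * Φ2ᵀ) *ᵥ ν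
      = Φ22⁻¹ *ᵥ (-((Φ21 *ᵥ x₀ + Φ22 *ᵥ (-(Φ1ᵀ *ᵥ ν))) + Φ2ᵀ *ᵥ ν)) := by
    simp only [mulVec_add, mulVec_neg, neg_mulVec, sub_mulVec, Matrix.mulVec_mulVec,
      neg_add_rev, neg_neg, ← Matrix.mul_assoc, hAB, Matrix.one_mul]
    abel
  have h2 : (Φ1 - Φ2 * (Φ11 - Φ12 * Φ22⁻¹ * Φ21)) *ᵥ x₀ + (Φ2 * Φ12 * Φ22⁻¹ * Φ2ᵀ) *ᵥ ν
      = Φ1 *ᵥ x₀ - Φ2 *ᵥ (Φ11 *ᵥ x₀ + Φ12 *ᵥ (-(Φ1ᵀ *ᵥ ν)))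
        + (Φ2 * Φ12 * Φ22⁻¹) *ᵥ ((Φ21 *ᵥ x₀ + Φ22 *ᵥ (-(Φ1ᵀ *ᵥ ν))) + Φ2ᵀ *ᵥ ν) := by
    have hcan : ∀ {m : ℕ} (B : Matrix (Fin n) (Fin m) ℝ), Φ22⁻¹ * (Φ22 * B) = B := fun B => by
      rw [← Matrix.mul_assoc, hAB, Matrix.one_mul]
    simp only [mulVec_add, mulVec_neg, neg_mulVec, sub_mulVec, Matrix.mulVec_mulVec,
      Matrix.mul_sub, Matrix.sub_mul, Matrix.mul_assoc, hBA, Matrix.mul_one]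
    rw [hcan Φ1ᵀ]
    abel
  have key : ∀ (a c : Fin n → ℝ) (b d : Fin k → ℝ),
      Sum.elim a b = Sum.elim c d ↔ a = c ∧ b = d := by
    intro a c b d
    constructor
    · intro h
      exact ⟨funext fun i => congrFun h (.inl i), funext fun j => congrFun h (.inr j)⟩
    · rintro ⟨rfl, rfl⟩; rfl
  rw [Matrix.fromBlocks_mulVec, key]
  simp only [Sum.elim_comp_inl, Sum.elim_comp_inr]
  rw [h1, h2]
  constructor
  · rintro ⟨e1, e2⟩
    have hw : (Φ21 *ᵥ x₀ + Φ22 *ᵥ (-(Φ1ᵀ *ᵥ ν))) + Φ2ᵀ *ᵥ ν = 0 := by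
      have h := congrArg (fun v => Φ22 *ᵥ v) e1
      simp only [Matrix.mulVec_mulVec, hBA, Matrix.one_mulVec, Matrix.mulVec_zero] at h
      exact neg_eq_zero.mp h
    refine ⟨eq_neg_of_add_eq_zero_left hw, ?_⟩
    rw [hw, mulVec_zero, add_zero] at e2
    exact e2
  · rintro ⟨e1, e2⟩
    have hw : (Φ21 *ᵥ x₀ + Φ22 *ᵥ (-(Φ1ᵀ *ᵥ ν))) + Φ2ᵀ *ᵥ ν = 0 := by
      rw [e1]; abel
    rw [hw]
    simp [e2]
end

section
/- Fix t ∈ ℝ and real n×n matrices F, R, S with R symmetric. Let ψ, W, V : ℝ → M_n(ℝ) be differentiable at t with W(t) symmetric, ψ(t) invertible, and derivatives at t given by ψ'(t) = (F + W(t)·R)·ψ(t), W'(t) = F·W(t) + W(t)·Fᵀ + W(t)·R·W(t) + S, V'(t) = −ψ(t)ᵀ·R·ψ(t). Then the 2n×2n block matrix function Φ(s) := [[ψ(s) + W(s)·(ψ(s)ᵀ)⁻¹·V(s), −W(s)·(ψ(s)ᵀ)⁻¹],[−(ψ(s)ᵀ)⁻¹·V(s), (ψ(s)ᵀ)⁻¹]]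 is differentiable at t with Φ'(t) = H·Φ(t), where H = [[F, −S],[R, −Fᵀ]]. -/
open Matrix

attribute [local instance] Matrix.normedAddCommGroup Matrix.normedSpace

theorem hasDerivAt_matrix' {m p : Type*} [Fintype m] [Fintype p]
    {f : ℝ → Matrix m p ℝ} {f' : Matrix m p ℝ} {t : ℝ} :
    HasDerivAt f f' t ↔ ∀ i j, HasDerivAt (fun s => f s i j) (f' i j) t :=
  ⟨fun h i j => (hasDerivAt_pi.1 ((hasDerivAt_pi.1 h) i)) j,
   fun h => hasDerivAt_pi.2 fun i => hasDerivAt_pi.2 fun j => h i j⟩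

theorem HasDerivAt.matmul' {m p q : Type*} [Fintype m] [Fintype p] [Fintype q]
    {A : ℝ → Matrix m p ℝ} {B : ℝ → Matrix p q ℝ} {A' : Matrix m p ℝ}
    {B' : Matrix p q ℝ} {t : ℝ}
    (hA : HasDerivAt A A' t) (hB : HasDerivAt B B' t) :
    HasDerivAt (fun s => A s * B s) (A' * B t + A t * B') t := by
  rw [hasDerivAt_matrix'] at hA hB ⊢
  intro i j
  have : (fun s => (A s * B s) i j) = fun s => ∑ k, A s i k * B s k j := by
    funext s; simp [Matrix.mul_apply]
  rw [this]
  have := HasDerivAt.fun_sum (fun k (_ : k ∈ Finset.univ) => (hA i k).fun_mul (hB k j))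
  refine this.congr_deriv ?_
  simp [Matrix.add_apply, Matrix.mul_apply, Finset.sum_add_distrib]

theorem HasDerivAt.mtranspose' {m p : Type*} [Fintype m] [Fintype p]
    {A : ℝ → Matrix m p ℝ} {A' : Matrix m p ℝ} {t : ℝ} (hA : HasDerivAt A A' t) :
    HasDerivAt (fun s => (A s)ᵀ) A'ᵀ t := by
  rw [hasDerivAt_matrix'] at hA ⊢
  intro i j
  exact hA j i

theorem differentiableAt_det' {n : ℕ} {f : ℝ → Matrix (Fin n) (Fin n) ℝ} {t : ℝ}
    (hf : ∀ i j, DifferentiableAt ℝ (fun s => f s i j) t) :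
    DifferentiableAt ℝ (fun s => (f s).det) t := by
  simp only [Matrix.det_apply']
  exact DifferentiableAt.fun_sum fun σ _ =>
    ((DifferentiableAt.fun_finsetProd fun i _ => hf (σ i) i).const_mul _)

theorem differentiableAt_adjugate' {n : ℕ} {f : ℝ → Matrix (Fin n) (Fin n) ℝ} {t : ℝ}
    (hf : ∀ i j, DifferentiableAt ℝ (fun s => f s i j) t) (i j : Fin n) :
    DifferentiableAt ℝ (fun s => (f s).adjugate i j) t := by
  simp only [Matrix.adjugate_apply]
  apply differentiableAt_det'
  intro a b
  simp only [Matrix.updateRow_apply]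
  by_cases h : a = j <;> simp [h, hf]

theorem differentiableAt_matrix_inv' {n : ℕ} {f : ℝ → Matrix (Fin n) (Fin n) ℝ}
    {f' : Matrix (Fin n) (Fin n) ℝ} {t : ℝ}
    (hf : HasDerivAt f f' t) (hu : IsUnit (f t)) :
    DifferentiableAt ℝ (fun s => (f s)⁻¹) t := by
  have hent : ∀ i j, DifferentiableAt ℝ (fun s => f s i j) t := fun i j =>
    ((hasDerivAt_matrix'.1 hf) i j).differentiableAt
  have hdet : DifferentiableAt ℝ (fun s => (f s).det) t := differentiableAt_det' hent
  have hne : (f t).det ≠ 0 := by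
    have := hu.map (Matrix.detMonoidHom (n := Fin n))
    simpa [isUnit_iff_ne_zero] using this
  have heq : (fun s => (f s)⁻¹)
      = fun s => Matrix.of fun i j => ((f s).det)⁻¹ * (f s).adjugate i j := by
    funext s; rw [Matrix.inv_def, Ring.inverse_eq_inv']; rfl
  rw [heq]
  apply differentiableAt_pi.2; intro i
  apply differentiableAt_pi.2; intro j
  exact (hdet.inv hne).mul (differentiableAt_adjugate' hent i j)

theorem hasDerivAt_matrix_inv' {n : ℕ} {f : ℝ → Matrix (Fin n) (Fin n) ℝ}
    {f' : Matrix (Fin n) (Fin n) ℝ} {t : ℝ}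
    (hf : HasDerivAt f f' t) (hu : IsUnit (f t))
    (hu' : ∀ᶠ s in nhds t, IsUnit (f s)) :
    HasDerivAt (fun s => (f s)⁻¹) (-((f t)⁻¹ * f' * (f t)⁻¹)) t := by
  have hg := (differentiableAt_matrix_inv' hf hu).hasDerivAt
  set g' := deriv (fun s => (f s)⁻¹) t with hg'def
  have hprod := hf.matmul' hg
  have hev : (fun s => f s * (f s)⁻¹) =ᶠ[nhds t] fun _ => (1 : Matrix (Fin n) (Fin n) ℝ) := by
    filter_upwards [hu'] with s hs
    exact Matrix.mul_nonsing_inv _ ((Matrix.isUnit_iff_isUnit_det _).1 hs)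
  have h1 : HasDerivAt (fun _ : ℝ => (1 : Matrix (Fin n) (Fin n) ℝ))
      (f' * (f t)⁻¹ + f t * g') t := hprod.congr_of_eventuallyEq hev.symm
  have heq : f' * (f t)⁻¹ + f t * g' = 0 :=
    h1.unique (hasDerivAt_const t (1 : Matrix (Fin n) (Fin n) ℝ))
  have hinv : (f t)⁻¹ * f t = 1 :=
    Matrix.nonsing_inv_mul _ ((Matrix.isUnit_iff_isUnit_det _).1 hu)
  have h2 : f t * g' = -(f' * (f t)⁻¹) := by
    rw [eq_neg_iff_add_eq_zero, add_comm]; exact heq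
  have h3 : g' = -((f t)⁻¹ * f' * (f t)⁻¹) := by
    have := congrArg (fun X => (f t)⁻¹ * X) h2
    simpa [← mul_assoc, hinv, mul_neg] using this
  exact h3 ▸ hg'def ▸ hg

theorem hasDerivAt_fromBlocks' {n : ℕ} {A B C D : ℝ → Matrix (Fin n) (Fin n) ℝ}
    {A' B' C' D' : Matrix (Fin n) (Fin n) ℝ} {t : ℝ}
    (hA : HasDerivAt A A' t) (hB : HasDerivAt B B' t)
    (hC : HasDerivAt C C' t) (hD : HasDerivAt D D' t) :
    HasDerivAt (fun s => Matrix.fromBlocks (A s) (B s) (C s) (D s))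
      (Matrix.fromBlocks A' B' C' D') t := by
  rw [hasDerivAt_matrix'] at hA hB hC hD ⊢
  rintro (i | i) (j | j) <;>
    simp only [Matrix.fromBlocks_apply₁₁, Matrix.fromBlocks_apply₁₂,
      Matrix.fromBlocks_apply₂₁, Matrix.fromBlocks_apply₂₂]
  · exact hA i j
  · exact hB i j
  · exact hC i j
  · exact hD i j

/-- The Zakhar-Itkin decomposition solves the fundamental-matrix equation: if
`ψ, W, V` satisfy the indicated Riccati-type differential equations at `t`,
`W t` is symmetric and `ψ` is invertible near `t`, then the block matrix
`Φ(s) = [[ψ + W (ψᵀ)⁻¹ V, -W (ψᵀ)⁻¹],[-(ψᵀ)⁻¹ V, (ψᵀ)⁻¹]](s)` satisfies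
`Φ'(t) = H Φ(t)` with `H = [[F, -S],[R, -Fᵀ]]`. -/
theorem stmt_15 {n : ℕ} (t : ℝ)
    (F R S : Matrix (Fin n) (Fin n) ℝ) (hR : Rᵀ = R)
    (ψ W V : ℝ → Matrix (Fin n) (Fin n) ℝ)
    (hWsymm : (W t)ᵀ = W t)
    (hψinv : IsUnit (ψ t))
    (hψinv' : ∀ᶠ s in nhds t, IsUnit (ψ s))
    (hψ : HasDerivAt ψ ((F + W t * R) * ψ t) t)
    (hW : HasDerivAt W (F * W t + W t * Fᵀ + W t * R * W t + S) t)
    (hV : HasDerivAt V (-((ψ t)ᵀ * R * ψ t)) t)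
    (Φ : ℝ → Matrix (Fin n ⊕ Fin n) (Fin n ⊕ Fin n) ℝ)
    (hΦ : Φ = fun s => Matrix.fromBlocks
      (ψ s + W s * ((ψ s)ᵀ)⁻¹ * V s) (-(W s * ((ψ s)ᵀ)⁻¹))
      (-(((ψ s)ᵀ)⁻¹ * V s)) (((ψ s)ᵀ)⁻¹))
    (H : Matrix (Fin n ⊕ Fin n) (Fin n ⊕ Fin n) ℝ)
    (hH : H = Matrix.fromBlocks F (-S) R (-Fᵀ)) :
    HasDerivAt Φ (H * Φ t) t := by
  -- notation
  set ψ' : Matrix (Fin n) (Fin n) ℝ := (F + W t * R) * ψ t with hψ'def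
  set W' : Matrix (Fin n) (Fin n) ℝ := F * W t + W t * Fᵀ + W t * R * W t + S with hW'def
  set V' : Matrix (Fin n) (Fin n) ℝ := -((ψ t)ᵀ * R * ψ t) with hV'def
  set g : ℝ → Matrix (Fin n) (Fin n) ℝ := fun s => ((ψ s)ᵀ)⁻¹ with hgdef
  -- transpose is a unit
  have hTu : IsUnit ((ψ t)ᵀ) := by
    rw [Matrix.isUnit_iff_isUnit_det, Matrix.det_transpose,
      ← Matrix.isUnit_iff_isUnit_det]; exact hψinv
  have hTu' : ∀ᶠ s in nhds t, IsUnit ((ψ s)ᵀ) := by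
    filter_upwards [hψinv'] with s hs
    rw [Matrix.isUnit_iff_isUnit_det, Matrix.det_transpose,
      ← Matrix.isUnit_iff_isUnit_det]; exact hs
  have hcancel : ∀ X : Matrix (Fin n) (Fin n) ℝ, g t * ((ψ t)ᵀ * X) = X := by
    intro X
    rw [← mul_assoc, Matrix.nonsing_inv_mul _ ((Matrix.isUnit_iff_isUnit_det _).1 hTu), one_mul]
  -- derivative of g
  have hψT : HasDerivAt (fun s => (ψ s)ᵀ) ψ'ᵀ t := hψ.mtranspose'
  have hg0 : HasDerivAt g (-(g t * ψ'ᵀ * g t)) t :=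
    hasDerivAt_matrix_inv' hψT hTu hTu'
  have hψ'T : ψ'ᵀ = (ψ t)ᵀ * (Fᵀ + R * W t) := by
    rw [hψ'def, Matrix.transpose_mul, Matrix.transpose_add, Matrix.transpose_mul, hR, hWsymm]
  set G' : Matrix (Fin n) (Fin n) ℝ := -((Fᵀ + R * W t) * g t) with hG'def
  have hg : HasDerivAt g G' t := by
    convert hg0 using 1
    rw [hψ'T, hG'def, mul_assoc, mul_assoc, hcancel]
  -- block derivatives
  have hWg : HasDerivAt (fun s => W s * g s) (W' * g t + W t * G') t := hW.matmul' hg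
  have hWgV : HasDerivAt (fun s => W s * g s * V s)
      ((W' * g t + W t * G') * V t + (W t * g t) * V') t := hWg.matmul' hV
  have hA : HasDerivAt (fun s => ψ s + W s * g s * V s)
      (ψ' + ((W' * g t + W t * G') * V t + (W t * g t) * V')) t := hψ.add hWgV
  have hB : HasDerivAt (fun s => -(W s * g s)) (-(W' * g t + W t * G')) t := hWg.neg
  have hC : HasDerivAt (fun s => -(g s * V s)) (-(G' * V t + g t * V')) t :=
    (hg.matmul' hV).neg
  have hMain := hasDerivAt_fromBlocks' hA hB hC hg
  rw [hΦ, hH]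
  convert hMain using 1
  show Matrix.fromBlocks F (-S) R (-Fᵀ) *
      Matrix.fromBlocks (ψ t + W t * g t * V t) (-(W t * g t)) (-(g t * V t)) (g t) = _
  simp only [Matrix.fromBlocks_multiply]
  rw [Matrix.fromBlocks_inj]
  refine ⟨?_, ?_, ?_, ?_⟩
  · -- block 1 1
    rw [hψ'def, hW'def, hV'def, hG'def]
    simp only [mul_add, add_mul, mul_neg, neg_mul, neg_neg, mul_assoc, hcancel]
    abel
  · -- block 1 2
    rw [hW'def, hG'def]
    simp only [mul_add, add_mul, mul_neg, neg_mul, neg_neg, mul_assoc, hcancel]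
    abel
  · -- block 2 1
    rw [hV'def, hG'def]
    simp only [mul_add, add_mul, mul_neg, neg_mul, neg_neg, mul_assoc, hcancel]
    abel
  · -- block 2 2
    rw [hG'def]
    simp only [mul_add, add_mul, mul_neg, neg_mul, neg_neg, mul_assoc, hcancel]
    abel
end

section
/- Let F be a real n×n matrix all of whose complex eigenvalues have negative real part (F is Hurwitz), and let S be any real n×n matrix. Then the improper integral ∫₀^∞ exp(t·F)·S·exp(t·Fᵀ) dt converges, and the matrix W₁ := −∫₀^∞ exp(t·F)·S·exp(t·Fᵀ) dt satisfies the algebraic Lyapunov equation −F·W₁ − W₁·Fᵀ + S = 0, i.e. F·W₁ + W₁·Fᵀ = S. -/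
open Matrix MeasureTheory

attribute [local instance] Matrix.linftyOpNormedRing Matrix.linftyOpNormedAlgebra

open NormedSpace
open scoped ENNReal NNReal
set_option maxHeartbeats 800000

section aux
variable {N : Type*} [Fintype N] [DecidableEq N]

lemma aux_pow_mulVec (A : Matrix N N ℂ) {v : N → ℂ} {l : ℂ}
    (hv : A.mulVec v = l • v) (k : ℕ) : (A ^ k).mulVec v = l ^ k • v := by
  induction k with
  | zero => simp
  | succ k ih =>
      rw [pow_succ', pow_succ', ← Matrix.mulVec_mulVec, ih, Matrix.mulVec_smul, hv,
        smul_smul, mul_comm, ← smul_smul]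

lemma aux_exp_mulVec (A : Matrix N N ℂ) {v : N → ℂ} {l : ℂ}
    (hv : A.mulVec v = l • v) :
    (exp A).mulVec v = Complex.exp l • v := by
  classical
  let L : Matrix N N ℂ →ₗ[ℂ] (N → ℂ) :=
    { toFun := fun M => M.mulVec v
      map_add' := fun M₁ M₂ => Matrix.add_mulVec _ _ _
      map_smul' := fun c M => Matrix.smul_mulVec _ _ _ }
  let L' : Matrix N N ℂ →L[ℂ] (N → ℂ) := LinearMap.toContinuousLinearMap L
  have h0 : (exp A).mulVec v = L' (exp A) := rfl
  rw [h0, exp_eq_tsum ℂ, L'.map_tsum (expSeries_summable' (𝕂 := ℂ) A)]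
  have h1 : ∀ k : ℕ, L' (((k.factorial : ℂ))⁻¹ • A ^ k) = (((k.factorial : ℂ))⁻¹ * l ^ k) • v := by
    intro k
    have : L' (A ^ k) = (A ^ k).mulVec v := rfl
    rw [_root_.map_smul, this, aux_pow_mulVec A hv k, smul_smul]
  simp_rw [h1]
  rw [Summable.tsum_smul_const]
  · congr 1
    rw [Complex.exp_eq_exp_ℂ, exp_eq_tsum ℂ]
    simp [smul_eq_mul]
  · have := expSeries_summable' (𝕂 := ℂ) l
    simpa [smul_eq_mul] using this

end aux

section aux2
variable {N : Type*} [Fintype N] [DecidableEq N]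

lemma aux_end_sub_pow {V : Type*} [AddCommGroup V] [Module ℂ V]
    (f : Module.End ℂ V) {x : V} {c μ : ℂ} (hx : f x = c • x) (k : ℕ) :
    ((f - μ • (1 : Module.End ℂ V)) ^ k) x = (c - μ) ^ k • x := by
  induction k with
  | zero => simp
  | succ k ih =>
      have h1 : (f - μ • (1 : Module.End ℂ V)) x = (c - μ) • x := by
        rw [LinearMap.sub_apply, hx, LinearMap.smul_apply, Module.End.one_apply, sub_smul]
      rw [pow_succ, Module.End.mul_apply, h1, LinearMap.map_smul, ih, smul_smul, ← pow_succ']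


lemma aux_spectrum_exp (A : Matrix N N ℂ) {μ : ℂ}
    (hμ : μ ∈ spectrum ℂ (exp A)) :
    ∃ l ∈ spectrum ℂ A, Complex.exp l = μ := by
  classical
  set e := (Matrix.toLinAlgEquiv' : Matrix N N ℂ ≃ₐ[ℂ] _) with he
  have hBspec : μ ∈ spectrum ℂ (e (exp A)) := by rwa [AlgEquiv.spectrum_eq]
  have hBev : Module.End.HasEigenvalue (e (exp A)) μ :=
    Module.End.HasEigenvalue.of_mem_spectrum hBspec
  haveI : Nontrivial (Module.End.maxGenEigenspace (e (exp A)) μ) := by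
    refine Submodule.nontrivial_iff_ne_bot.mpr (fun h => hBev ?_)
    exact le_bot_iff.mp (h ▸ Module.End.genEigenspace_le_maximal _ _ _)
  have hcomm : Commute (e (exp A)) (e A) := by
    have h1 : Commute (exp A) A := ((Commute.refl A).exp_left)
    simpa using h1.map e.toAlgHom.toRingHom.toMonoidHom
  have hmaps := Module.End.mapsTo_maxGenEigenspace_of_comm hcomm μ
  obtain ⟨l, hl⟩ := Module.End.exists_eigenvalue ((e A).restrict hmaps)
  obtain ⟨u, hu⟩ := hl.exists_hasEigenvector
  have hvne : (u : N → ℂ) ≠ 0 := fun h => hu.right (by exact_mod_cast Subtype.ext h)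
  have hApp : (e A) (u : N → ℂ) = l • (u : N → ℂ) := by
    have h2 := hu.apply_eq_smul
    have := congrArg (Subtype.val) h2
    exact this
  have hmv : A.mulVec (u : N → ℂ) = l • (u : N → ℂ) :=
    (Matrix.toLinAlgEquiv'_apply A (u : N → ℂ)).symm.trans hApp
  have hexp : (e (exp A)) (u : N → ℂ) = Complex.exp l • (u : N → ℂ) :=
    (Matrix.toLinAlgEquiv'_apply (exp A) (u : N → ℂ)).trans (aux_exp_mulVec A hmv)
  obtain ⟨k, hk⟩ := (Module.End.mem_maxGenEigenspace _ _ _).mp u.2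
  rw [aux_end_sub_pow _ hexp k, smul_eq_zero] at hk
  rcases hk with hk | hk
  · have hk0 : Complex.exp l = μ := by
      have := (pow_eq_zero_iff'.mp hk).1
      linear_combination this
    refine ⟨l, ?_, hk0⟩
    have hev : Module.End.HasEigenvalue (e A) l :=
      Module.End.hasEigenvalue_of_hasEigenvector
        ⟨Module.End.mem_eigenspace_iff.mpr hApp, hvne⟩
    have := hev.mem_spectrum
    rwa [AlgEquiv.spectrum_eq] at this
  · exact absurd hk hvne
end aux2

section aux3
variable {N : Type*} [Fintype N] [DecidableEq N] [Nonempty N]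

lemma aux_norm_exp_le (A : Matrix N N ℂ) : ‖exp A‖ ≤ Real.exp ‖A‖ := by
  rw [exp_eq_tsum ℂ]
  refine (norm_tsum_le_tsum_norm (norm_expSeries_summable' A)).trans ?_
  rw [Real.exp_eq_exp_ℝ, exp_eq_tsum ℝ]
  refine Summable.tsum_le_tsum ?_ (norm_expSeries_summable' A) ?_
  · intro k
    rw [norm_smul, smul_eq_mul]
    have h1 : ‖((k.factorial : ℂ))⁻¹‖ = ((k.factorial : ℝ))⁻¹ := by
      rw [norm_inv]; norm_num
    rw [h1]
    gcongr
    exact norm_pow_le A k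
  · have := norm_expSeries_summable' (𝕂 := ℝ) (‖A‖)
    simpa [smul_eq_mul] using this

lemma aux_norm_exp_le_real (B : Matrix N N ℝ) : ‖exp B‖ ≤ Real.exp ‖B‖ := by
  rw [exp_eq_tsum ℝ]
  refine (norm_tsum_le_tsum_norm (norm_expSeries_summable' B)).trans ?_
  rw [Real.exp_eq_exp_ℝ, exp_eq_tsum ℝ]
  refine Summable.tsum_le_tsum ?_ (norm_expSeries_summable' B) ?_
  · intro k
    rw [norm_smul, smul_eq_mul]
    have h1 : ‖((k.factorial : ℝ))⁻¹‖ = ((k.factorial : ℝ))⁻¹ := by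
      rw [Real.norm_eq_abs, abs_of_nonneg]; positivity
    rw [h1]
    gcongr
    exact norm_pow_le B k
  · have := norm_expSeries_summable' (𝕂 := ℝ) (‖B‖)
    simpa [smul_eq_mul] using this

end aux3

section aux4
variable {N : Type*} [Fintype N] [DecidableEq N] [Nonempty N]

lemma aux_decay (A : Matrix N N ℂ) (hA : ∀ μ ∈ spectrum ℂ A, μ.re < 0) :
    ∃ c > 0, ∃ ε > 0, ∀ t : ℝ, 0 ≤ t → ‖exp (t • A)‖ ≤ c * Real.exp (-ε * t) := by
  classical
  have hsr : spectralRadius ℂ (exp A) < 1 := by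
    have h := spectrum.spectralRadius_lt_of_forall_lt (exp A) (r := 1) ?_
    · simpa using h
    · intro z hz
      obtain ⟨l, hl, rfl⟩ := aux_spectrum_exp A hz
      have h1 : ‖Complex.exp l‖ < 1 := by
        rw [Complex.norm_exp]
        exact Real.exp_lt_one_iff.mpr (hA l hl)
      exact_mod_cast h1
  obtain ⟨r, hr1, hr2⟩ := ENNReal.lt_iff_exists_nnreal_btwn.mp hsr
  have hr2' : (r : ℝ) < 1 := by exact_mod_cast hr2
  have hr0 : (0 : ℝ) < r := by
    have : (0 : ℝ≥0∞) < r := zero_le.trans_lt hr1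
    exact_mod_cast this
  have hg := spectrum.pow_nnnorm_pow_one_div_tendsto_nhds_spectralRadius (exp A)
  have hev : ∀ᶠ k : ℕ in Filter.atTop,
      (‖(exp A) ^ k‖₊ : ℝ≥0∞) ^ (1 / (k : ℝ)) < (r : ℝ≥0∞) :=
    hg.eventually_lt_const hr1
  obtain ⟨K, hK⟩ := Filter.eventually_atTop.mp hev
  have hBk : ∀ k : ℕ, K ≤ k → 1 ≤ k → ‖(exp A) ^ k‖ ≤ (r : ℝ) ^ k := by
    intro k hk hk1
    have hkpos : (0 : ℝ) < k := by exact_mod_cast hk1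
    have h2 := ENNReal.rpow_lt_rpow (hK k hk) hkpos
    rw [← ENNReal.rpow_mul, one_div, inv_mul_cancel₀ (ne_of_gt hkpos),
      ENNReal.rpow_one, ENNReal.rpow_natCast, ← ENNReal.coe_pow,
      ENNReal.coe_lt_coe] at h2
    have h3 : ‖(exp A) ^ k‖₊ ≤ r ^ k := le_of_lt h2
    exact_mod_cast h3
  set ε : ℝ := -Real.log (r : ℝ) with hε
  have hlog : Real.log (r : ℝ) < 0 := Real.log_neg hr0 hr2'
  have hεpos : 0 < ε := by simp [hε]; linarith
  set M : ℝ := ‖A‖ with hM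
  have hM0 : 0 ≤ M := norm_nonneg _
  set Kr : ℝ := ((max K 1 : ℕ) : ℝ) + 1 with hKr
  have hKr0 : 0 < Kr := by positivity
  refine ⟨Real.exp (Kr * (M + ε)) + Real.exp (M + ε), by positivity, ε, hεpos, ?_⟩
  intro t ht
  have hnorm_smul : ∀ s : ℝ, 0 ≤ s → ‖exp (s • A)‖ ≤ Real.exp (s * M) := by
    intro s hs
    refine (aux_norm_exp_le _).trans ?_
    rw [norm_smul, Real.norm_eq_abs, abs_of_nonneg hs]
  rcases le_or_gt t Kr with hcase | hcase
  · have h1 : ‖exp (t • A)‖ ≤ Real.exp (t * M) := hnorm_smul t ht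
    have h2 : t * M ≤ Kr * (M + ε) + (-ε * t) := by nlinarith
    calc ‖exp (t • A)‖ ≤ Real.exp (t * M) := h1
      _ ≤ Real.exp (Kr * (M + ε) + (-ε * t)) := Real.exp_le_exp.mpr h2
      _ = Real.exp (Kr * (M + ε)) * Real.exp (-ε * t) := Real.exp_add _ _
      _ ≤ _ := by
          have := Real.exp_pos (M + ε)
          have := Real.exp_pos (-ε * t)
          nlinarith
  · set k : ℕ := ⌊t⌋₊ with hk
    have hkle : (k : ℝ) ≤ t := Nat.floor_le ht
    have hklt : t < (k : ℝ) + 1 := Nat.lt_floor_add_one t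
    have hc1 : ((K : ℕ) : ℝ) ≤ ((K ⊔ 1 : ℕ) : ℝ) := by
      exact_mod_cast le_max_left K 1
    have hc2 : ((1 : ℕ) : ℝ) ≤ ((K ⊔ 1 : ℕ) : ℝ) := by
      exact_mod_cast le_max_right K 1
    have hkK : K ≤ k := Nat.le_floor (by rw [hKr] at hcase; linarith)
    have hk1 : 1 ≤ k := Nat.le_floor (by rw [hKr] at hcase; linarith)
    have hsplit : t • A = (t - k) • A + (k : ℝ) • A := by
      rw [← add_smul]; ring_nf
    have hcomm : Commute ((t - (k:ℝ)) • A) ((k : ℝ) • A) :=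
      ((Commute.refl A).smul_left _).smul_right _
    have hexp_eq : exp (t • A) = exp ((t - k) • A) * exp A ^ k := by
      rw [hsplit]; refine (exp_add_of_commute hcomm).trans ?_
      congr 1
      rw [Nat.cast_smul_eq_nsmul ℝ k A, NormedSpace.exp_nsmul]
      rfl
    have h5 : ‖exp (t • A)‖ ≤ Real.exp ((t - k) * M) * (r : ℝ) ^ k := by
      rw [hexp_eq]
      refine (norm_mul_le _ _).trans ?_
      exact mul_le_mul (hnorm_smul _ (by linarith)) (hBk k hkK hk1)
        (norm_nonneg _) (Real.exp_pos _).le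
    have h6 : (r : ℝ) ^ k = Real.exp ((k : ℝ) * Real.log r) := by
      rw [← Real.log_pow, Real.exp_log (by positivity)]
    have h7 : ((k : ℝ)) * Real.log r ≤ (t - 1) * Real.log r := by
      apply mul_le_mul_of_nonpos_right _ (le_of_lt hlog)
      linarith
    have h8 : Real.exp ((t - k) * M) ≤ Real.exp M := by
      apply Real.exp_le_exp.mpr
      nlinarith
    calc ‖exp (t • A)‖ ≤ Real.exp ((t - k) * M) * (r : ℝ) ^ k := h5
      _ ≤ Real.exp M * Real.exp ((t - 1) * Real.log r) := by
          rw [h6]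
          exact mul_le_mul h8 (Real.exp_le_exp.mpr h7) (Real.exp_pos _).le
            (Real.exp_pos _).le
      _ = Real.exp (M + ε) * Real.exp (-ε * t) := by
          rw [← Real.exp_add, ← Real.exp_add]
          congr 1
          simp only [hε]
          ring
      _ ≤ _ := by
          have := Real.exp_pos (Kr * (M + ε))
          have := Real.exp_pos (-ε * t)
          nlinarith

end aux4

section aux5
variable {N : Type*} [Fintype N] [DecidableEq N]

lemma aux_map_exp (B : Matrix N N ℝ) :
    (exp B).map Complex.ofReal = exp (B.map Complex.ofReal) := by
  have hcont : Continuous fun M : Matrix N N ℝ => M.map Complex.ofReal :=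
    Continuous.matrix_map continuous_id Complex.continuous_ofReal
  have h1 := NormedSpace.map_exp (Complex.ofRealHom.mapMatrix :
      Matrix N N ℝ →+* Matrix N N ℂ) hcont B
  have h2 : (Complex.ofRealHom.mapMatrix : Matrix N N ℝ →+* Matrix N N ℂ) B
      = B.map Complex.ofReal := rfl
  rw [h2] at h1
  calc (exp B).map Complex.ofReal = exp (B.map Complex.ofReal) := h1
    _ = exp (B.map Complex.ofReal) := rfl

lemma aux_norm_map (M : Matrix N N ℝ) : ‖M.map Complex.ofReal‖ = ‖M‖ := by
  rw [Matrix.linfty_opNorm_def, Matrix.linfty_opNorm_def]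
  congr 1
  apply congrArg
  funext i
  apply congrArg
  funext j
  simp [Matrix.map_apply]

lemma aux_spectrum_transpose (M : Matrix N N ℂ) :
    spectrum ℂ Mᵀ = spectrum ℂ M := by
  ext μ
  rw [spectrum.mem_iff, spectrum.mem_iff]
  have h1 : (algebraMap ℂ (Matrix N N ℂ)) μ - Mᵀ = ((algebraMap ℂ (Matrix N N ℂ)) μ - M)ᵀ := by
    rw [Matrix.transpose_sub]
    congr 1
    ext i j
    simp [Matrix.transpose_apply, Matrix.algebraMap_matrix_apply, eq_comm]
  rw [h1]
  rw [Matrix.isUnit_iff_isUnit_det, Matrix.isUnit_iff_isUnit_det, Matrix.det_transpose]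

end aux5

section aux6
variable {N : Type*} [Fintype N] [DecidableEq N]

lemma aux_real_decay [Nonempty N] (F : Matrix N N ℝ)
    (hF : ∀ μ ∈ spectrum ℂ (F.map Complex.ofReal), μ.re < 0) :
    ∃ c > 0, ∃ ε > 0, ∀ t : ℝ, 0 ≤ t → ‖exp (t • F)‖ ≤ c * Real.exp (-ε * t) := by
  obtain ⟨c, hc, ε, hε, h⟩ := aux_decay (F.map Complex.ofReal) hF
  refine ⟨c, hc, ε, hε, fun t ht => ?_⟩
  have h1 : (t • F).map Complex.ofReal = t • (F.map Complex.ofReal) := by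
    ext i j
    simp [Matrix.map_apply, Complex.real_smul]
  have h2 : ‖exp (t • F)‖ = ‖exp (t • F.map Complex.ofReal)‖ := by
    rw [← aux_norm_map, aux_map_exp, h1]
  rw [h2]; exact h t ht

end aux6

/-- If `F` is Hurwitz (all complex eigenvalues have negative real part), then
`∫₀^∞ e^{tF} S e^{tFᵀ} dt` converges, and
`W₁ = -∫₀^∞ e^{tF} S e^{tFᵀ} dt` solves the algebraic Lyapunov equation
`F W₁ + W₁ Fᵀ = S`. -/
theorem stmt_17 {n : ℕ} (F S : Matrix (Fin n) (Fin n) ℝ)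
    (hF : ∀ μ ∈ spectrum ℂ (F.map Complex.ofReal), μ.re < 0)
    (W₁ : Matrix (Fin n) (Fin n) ℝ)
    (hW₁ : W₁ = -∫ t in Set.Ioi (0 : ℝ),
      NormedSpace.exp (t • F) * S * NormedSpace.exp (t • Fᵀ)) :
    @IntegrableOn _ _ _ _ SeminormedAddGroup.toContinuousENorm
      (fun t : ℝ => NormedSpace.exp (t • F) * S * NormedSpace.exp (t • Fᵀ))
      (Set.Ioi 0) volume ∧
    F * W₁ + W₁ * Fᵀ = S := by
  rcases Nat.eq_zero_or_pos n with hn | hn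
  · subst hn
    haveI : Subsingleton (Matrix (Fin 0) (Fin 0) ℝ) :=
      ⟨fun a b => by ext i j; exact i.elim0⟩
    constructor
    · have h0 : (fun t : ℝ => exp (t • F) * S * exp (t • Fᵀ)) =
          fun _ => (0 : Matrix (Fin 0) (Fin 0) ℝ) :=
        funext fun _ => Subsingleton.elim _ _
      rw [h0]
      exact integrableOn_zero
    · exact Subsingleton.elim _ _
  haveI : Nonempty (Fin n) := ⟨⟨0, hn⟩⟩
  obtain ⟨c₁, hc₁, ε₁, hε₁, h₁⟩ := aux_real_decay F hF
  have hFT : ∀ μ ∈ spectrum ℂ (Fᵀ.map Complex.ofReal), μ.re < 0 := by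
    intro μ hμ
    rw [Matrix.transpose_map, aux_spectrum_transpose] at hμ
    exact hF μ hμ
  obtain ⟨c₂, hc₂, ε₂, hε₂, h₂⟩ := aux_real_decay Fᵀ hFT
  set f : ℝ → Matrix (Fin n) (Fin n) ℝ :=
    fun t => exp (t • F) * S * exp (t • Fᵀ) with hfdef
  letI : TopologicalSpace (Matrix (Fin n) (Fin n) ℝ) :=
    (inferInstance : SeminormedAddGroup (Matrix (Fin n) (Fin n) ℝ)).toPseudoMetricSpace.toUniformSpace.toTopologicalSpace
  have hcont : Continuous f := by
    refine Continuous.mul (Continuous.mul ?_ continuous_const) ?_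
    · exact NormedSpace.exp_continuous.comp (continuous_id.smul continuous_const)
    · exact NormedSpace.exp_continuous.comp (continuous_id.smul continuous_const)
  have hbound : ∀ t : ℝ, 0 ≤ t →
      ‖f t‖ ≤ (c₁ * ‖S‖ * c₂) * Real.exp (-(ε₁ + ε₂) * t) := by
    intro t ht
    have e1 := h₁ t ht
    have e2 := h₂ t ht
    calc ‖f t‖ ≤ ‖exp (t • F) * S‖ * ‖exp (t • Fᵀ)‖ := norm_mul_le _ _
      _ ≤ ‖exp (t • F)‖ * ‖S‖ * ‖exp (t • Fᵀ)‖ :=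
          mul_le_mul_of_nonneg_right (norm_mul_le _ _) (norm_nonneg _)
      _ ≤ (c₁ * Real.exp (-ε₁ * t)) * ‖S‖ * (c₂ * Real.exp (-ε₂ * t)) := by
          have hS : (0:ℝ) ≤ ‖S‖ := norm_nonneg _
          have h4 : (0:ℝ) ≤ ‖exp (t • Fᵀ)‖ := norm_nonneg _
          have ha := mul_le_mul_of_nonneg_right
            (mul_le_mul_of_nonneg_right e1 hS) h4
          have hb := mul_le_mul_of_nonneg_left e2
            (by positivity : (0:ℝ) ≤ c₁ * Real.exp (-ε₁ * t) * ‖S‖)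
          exact ha.trans hb
      _ = (c₁ * ‖S‖ * c₂) * Real.exp (-(ε₁ + ε₂) * t) := by
          rw [show -(ε₁ + ε₂) * t = -ε₁ * t + -ε₂ * t by ring, Real.exp_add]
          ring
  have hεsum : (0:ℝ) < ε₁ + ε₂ := by linarith
  have hint : IntegrableOn f (Set.Ioi 0) := by
    have hg : IntegrableOn
        (fun t => (c₁ * ‖S‖ * c₂) * Real.exp (-(ε₁ + ε₂) * t)) (Set.Ioi (0:ℝ)) :=
      (exp_neg_integrableOn_Ioi 0 hεsum).const_mul _
    refine Integrable.mono' hg hcont.aestronglyMeasurable.restrict ?_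
    refine (ae_restrict_iff' measurableSet_Ioi).mpr ?_
    exact Filter.Eventually.of_forall fun t ht => hbound t (le_of_lt ht)
  refine ⟨hint, ?_⟩
  have hderiv : ∀ t : ℝ, HasDerivAt f (F * f t + f t * Fᵀ) t := by
    intro t
    have d1 : HasDerivAt (fun u : ℝ => exp (u • F)) (F * exp (t • F)) t :=
      hasDerivAt_exp_smul_const' F t
    have d2 : HasDerivAt (fun u : ℝ => exp (u • Fᵀ)) (exp (t • Fᵀ) * Fᵀ) t :=
      hasDerivAt_exp_smul_const Fᵀ t
    have d3 : HasDerivAt (fun u : ℝ => exp (u • F) * S)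
        (F * exp (t • F) * S) t := d1.mul_const S
    have d4 := d3.mul d2
    convert d4 using 1
    case e'_4 => rfl
    case e'_5 => rfl
    case e'_8 => rfl
    case e'_9 => simp only [f]; noncomm_ring
  have htend : Filter.Tendsto f Filter.atTop (nhds 0) := by
    apply squeeze_zero_norm'
      (a := fun t => (c₁ * ‖S‖ * c₂) * Real.exp (-(ε₁ + ε₂) * t))
    · filter_upwards [Filter.eventually_ge_atTop (0:ℝ)] with t ht
      exact hbound t ht
    · have hexp : Filter.Tendsto (fun t : ℝ => Real.exp (-(ε₁ + ε₂) * t))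
          Filter.atTop (nhds 0) := by
        apply Real.tendsto_exp_atBot.comp
        exact (Filter.tendsto_const_mul_atBot_of_neg (by linarith)).mpr Filter.tendsto_id
      simpa using hexp.const_mul (c₁ * ‖S‖ * c₂)
  have hmulint1 : IntegrableOn (fun t => F * f t) (Set.Ioi (0:ℝ)) :=
    hint.const_mul F
  have hmulint2 : IntegrableOn (fun t => f t * Fᵀ) (Set.Ioi (0:ℝ)) :=
    hint.mul_const Fᵀ
  have hf'int : IntegrableOn (fun t => F * f t + f t * Fᵀ) (Set.Ioi (0:ℝ)) :=
    hmulint1.add hmulint2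
  have key := integral_Ioi_of_hasDerivAt_of_tendsto'
    (f := f) (f' := fun t => F * f t + f t * Fᵀ) (a := 0)
    (fun x _ => hderiv x) hf'int htend
  have hf0 : f 0 = S := by
    simp [hfdef, NormedSpace.exp_zero]
  rw [hf0, zero_sub] at key
  have hsplit : (∫ t in Set.Ioi (0:ℝ), (F * f t + f t * Fᵀ))
      = F * (∫ t in Set.Ioi (0:ℝ), f t) + (∫ t in Set.Ioi (0:ℝ), f t) * Fᵀ := by
    rw [integral_add hmulint1 hmulint2]
    congr 1
    · exact ((ContinuousLinearMap.mul ℝ (Matrix (Fin n) (Fin n) ℝ) F).integral_comp_comm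
        hint)
    · exact (((ContinuousLinearMap.mul ℝ (Matrix (Fin n) (Fin n) ℝ)).flip Fᵀ).integral_comp_comm
        hint)
  rw [hsplit] at key
  rw [hW₁]
  have : F * (-∫ t in Set.Ioi (0:ℝ), f t) + (-∫ t in Set.Ioi (0:ℝ), f t) * Fᵀ
      = -(F * (∫ t in Set.Ioi (0:ℝ), f t) + (∫ t in Set.Ioi (0:ℝ), f t) * Fᵀ) := by
    rw [mul_neg, neg_mul, neg_add]
  rw [this, key, neg_neg]
end
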